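/- Let X = (X₁,...,X_m) be a non-degenerate wide-sense multi-self-similar ℝ^m-valued random field on T = [0,∞)^d with scaling exponents f_j(a) = ∏_{i=1}^d a_i^{H_i^{(j)}}, and suppose for some index j that H₁^{(j)} = 0 while H_i^{(j)} > 0 for all i ≥ 2. Then for every a₁ > 0, the field {X_j(a₁t₁, t₂,...,t_d), t ∈ T} has the same finite-dimensional distributions as {X_j(t₁,...,t_d), t ∈ T}, and consequently {X_j(t₁,t₂,...,t_d), t ∈ T} =_{f.d.d.} {X_j(0, t₂,...,t_d), t ∈ T}; i.e. X_j does not depend on the variable t₁. -/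

import Mathlib

open MeasureTheory Filter Topology
open scoped ENNReal NNReal

/-- A probability measure on `ℝ` invariant under a translation must translate by `0`. -/
private lemma shift_eq_zero {ν : Measure ℝ} [IsProbabilityMeasure ν] {c : ℝ}
    (h : ν.map (· + c) = ν) : c = 0 := by
  by_contra hc
  have habs : 0 < |c| := abs_pos.2 hc
  have hn : ∀ n : ℕ, ν.map (· + (n : ℝ) * c) = ν := by
    intro n
    induction n with
    | zero =>
      have : (fun x : ℝ => x + ((0 : ℕ) : ℝ) * c) = id := by funext x; simp
      rw [this, Measure.map_id]
    | succ n ih =>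
      have hcomp : (fun x : ℝ => x + ((n + 1 : ℕ) : ℝ) * c)
          = ((fun x => x + (n : ℝ) * c) ∘ fun x => x + c) := by
        funext x; simp only [Function.comp_apply]; push_cast; ring
      rw [hcomp, ← Measure.map_map (by fun_prop) (by fun_prop), h, ih]
  obtain ⟨N, hN⟩ : ∃ N : ℕ, (1 : ℝ≥0∞) / 2 < ν (Set.Icc (-(N : ℝ)) N) := by
    have hmono : Monotone fun n : ℕ => Set.Icc (-(n : ℝ)) n := fun a b hab =>
      Set.Icc_subset_Icc (neg_le_neg (Nat.cast_le.2 hab)) (Nat.cast_le.2 hab)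
    have hun : (⋃ n : ℕ, Set.Icc (-(n : ℝ)) n) = Set.univ := by
      ext x
      simp only [Set.mem_iUnion, Set.mem_univ, iff_true, Set.mem_Icc]
      obtain ⟨n, hn⟩ := exists_nat_ge |x|
      exact ⟨n, (abs_le.1 hn).1, (abs_le.1 hn).2⟩
    have hten := tendsto_measure_iUnion_atTop (μ := ν) hmono
    rw [hun, measure_univ] at hten
    exact (hten.eventually (eventually_gt_nhds (by norm_num : (1 : ℝ≥0∞) / 2 < 1))).exists
  obtain ⟨n, hngt⟩ := exists_nat_gt ((2 * (N : ℝ) + 1) / |c|)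
  have hnc : 2 * (N : ℝ) + 1 < |(n : ℝ) * c| := by
    rw [abs_mul, Nat.abs_cast]
    rw [div_lt_iff₀ habs] at hngt
    linarith
  have hI2 : ν (Set.Icc (-(N : ℝ) - (n : ℝ) * c) ((N : ℝ) - (n : ℝ) * c))
      = ν (Set.Icc (-(N : ℝ)) N) := by
    conv_rhs => rw [← hn n]
    rw [Measure.map_apply (by fun_prop) measurableSet_Icc, Set.preimage_add_const_Icc]
  have hdisj : Disjoint (Set.Icc (-(N : ℝ)) N)
      (Set.Icc (-(N : ℝ) - (n : ℝ) * c) ((N : ℝ) - (n : ℝ) * c)) := by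
    rw [Set.disjoint_left]
    intro x hx1 hx2
    rw [Set.mem_Icc] at hx1 hx2
    have h1 : |x| ≤ N := abs_le.2 hx1
    have h2 : |x + (n : ℝ) * c| ≤ N := abs_le.2 ⟨by linarith [hx2.1], by linarith [hx2.2]⟩
    have h3 : |(n : ℝ) * c| ≤ |x + (n : ℝ) * c| + |x| := by
      have hrw : (n : ℝ) * c = (x + (n : ℝ) * c) + -x := by ring
      calc |(n : ℝ) * c| = |(x + (n : ℝ) * c) + -x| := by rw [← hrw]
        _ ≤ |x + (n : ℝ) * c| + |-x| := abs_add_le _ _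
        _ = |x + (n : ℝ) * c| + |x| := by rw [abs_neg]
    linarith
  have hsum := measure_union (μ := ν) hdisj (measurableSet_Icc (a := -(N : ℝ) - (n : ℝ) * c) (b := (N : ℝ) - (n : ℝ) * c))
  have hle : ν (Set.Icc (-(N : ℝ)) N ∪
      Set.Icc (-(N : ℝ) - (n : ℝ) * c) ((N : ℝ) - (n : ℝ) * c)) ≤ 1 :=
    le_trans (measure_mono (Set.subset_univ _)) (le_of_eq measure_univ)
  have hcontra : (1 : ℝ≥0∞) < 1 := by
    calc (1 : ℝ≥0∞) = 1 / 2 + 1 / 2 := (ENNReal.add_halves 1).symm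
      _ < ν (Set.Icc (-(N : ℝ)) N)
          + ν (Set.Icc (-(N : ℝ) - (n : ℝ) * c) ((N : ℝ) - (n : ℝ) * c)) :=
        ENNReal.add_lt_add hN (lt_of_lt_of_eq hN hI2.symm)
      _ = ν (Set.Icc (-(N : ℝ)) N ∪
          Set.Icc (-(N : ℝ) - (n : ℝ) * c) ((N : ℝ) - (n : ℝ) * c)) := hsum.symm
      _ ≤ 1 := hle
  exact lt_irrefl _ hcontra

/-- If `Y n → Z` a.e. and `Y n` has the law of `ν` translated by `r n` with `|r n| → ∞`,
we get a contradiction. -/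
private lemma escape {Ω : Type*} [MeasurableSpace Ω] {P : Measure Ω}
    [IsProbabilityMeasure P] {ν : Measure ℝ} [IsProbabilityMeasure ν]
    {Y : ℕ → Ω → ℝ} (hYm : ∀ n, Measurable (Y n)) {Z : Ω → ℝ}
    (hae : ∀ᵐ ω ∂P, Tendsto (fun n => Y n ω) atTop (𝓝 (Z ω)))
    {r : ℕ → ℝ} (hr : Tendsto (fun n => |r n|) atTop atTop)
    (hY : ∀ n, P.map (Y n) = ν.map (· + r n)) : False := by
  have hZae : AEMeasurable Z P :=
    aemeasurable_of_tendsto_metrizable_ae atTop (fun n => (hYm n).aemeasurable) hae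
  set C : ℕ → ℝ → ℝ := fun R x => max (1 - |x| / ((R : ℝ) + 1)) 0 with hCdef
  have hCcont : ∀ R, Continuous (C R) := fun R =>
    ((continuous_const.sub (continuous_abs.div_const _)).max continuous_const)
  have hCnonneg : ∀ R x, 0 ≤ C R x := fun R x => le_max_right _ _
  have hCle : ∀ R x, C R x ≤ 1 := by
    intro R x
    refine max_le ?_ zero_le_one
    have : 0 ≤ |x| / ((R : ℝ) + 1) := by positivity
    linarith
  have hCzero : ∀ (R : ℕ) (x : ℝ), (R : ℝ) + 1 ≤ |x| → C R x = 0 := by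
    intro R x hx
    have hR1 : (0 : ℝ) < (R : ℝ) + 1 := by positivity
    have : 1 - |x| / ((R : ℝ) + 1) ≤ 0 := by
      rw [sub_nonpos]
      exact (one_le_div hR1).2 hx
    exact max_eq_right this
  have key : ∀ R : ℕ, ∫ ω, C R (Z ω) ∂P = 0 := by
    intro R
    have h1 : Tendsto (fun n => ∫ ω, C R (Y n ω) ∂P) atTop (𝓝 (∫ ω, C R (Z ω) ∂P)) := by
      refine tendsto_integral_filter_of_dominated_convergence (fun _ => (1 : ℝ))
        (Eventually.of_forall fun n => ((hCcont R).measurable.comp (hYm n)).aestronglyMeasurable)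
        (Eventually.of_forall fun n => ae_of_all _ fun ω => ?_)
        (integrable_const 1)
        (hae.mono fun ω h => ((hCcont R).tendsto _).comp h)
      rw [Real.norm_eq_abs, abs_of_nonneg (hCnonneg R _)]
      exact hCle R _
    have h2 : ∀ n, ∫ ω, C R (Y n ω) ∂P = ∫ x, C R (x + r n) ∂ν := by
      intro n
      rw [← integral_map (hYm n).aemeasurable (hCcont R).aestronglyMeasurable, hY n,
        integral_map (by fun_prop) (hCcont R).aestronglyMeasurable]
    have h3 : Tendsto (fun n => ∫ x, C R (x + r n) ∂ν) atTop (𝓝 (∫ _ : ℝ, (0 : ℝ) ∂ν)) := by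
      refine tendsto_integral_filter_of_dominated_convergence (fun _ => (1 : ℝ))
        (Eventually.of_forall fun n =>
          ((hCcont R).comp (continuous_id.add continuous_const)).aestronglyMeasurable)
        (Eventually.of_forall fun n => ae_of_all _ fun x => ?_)
        (integrable_const 1)
        (ae_of_all _ fun x => ?_)
      · rw [Real.norm_eq_abs, abs_of_nonneg (hCnonneg R _)]
        exact hCle R _
      · have hev : ∀ᶠ n in atTop, C R (x + r n) = 0 := by
          filter_upwards [hr.eventually_ge_atTop ((R : ℝ) + 1 + |x|)] with n hn
          refine hCzero R _ ?_
          have : |r n| ≤ |x + r n| + |x| := by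
            calc |r n| = |(x + r n) + -x| := by congr 1; ring
              _ ≤ |x + r n| + |-x| := abs_add_le _ _
              _ = |x + r n| + |x| := by rw [abs_neg]
          linarith
        exact Tendsto.congr' (EventuallyEq.symm (hev : (fun n => C R (x + r n)) =ᶠ[atTop] fun _ => (0:ℝ))) tendsto_const_nhds
    rw [integral_const, smul_zero] at h3
    have h1' : Tendsto (fun n => ∫ x, C R (x + r n) ∂ν) atTop (𝓝 (∫ ω, C R (Z ω) ∂P)) := by
      refine h1.congr fun n => h2 n
    exact tendsto_nhds_unique h1' h3
  have hZero : ∀ R : ℕ, ∀ᵐ ω ∂P, C R (Z ω) = 0 := by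
    intro R
    have hint : Integrable (fun ω => C R (Z ω)) P := by
      refine Integrable.mono' (integrable_const (1 : ℝ))
        ((hCcont R).measurable.comp_aemeasurable hZae).aestronglyMeasurable (ae_of_all _ fun ω => ?_)
      rw [Real.norm_eq_abs, abs_of_nonneg (hCnonneg R _)]
      exact hCle R _
    have := (integral_eq_zero_iff_of_nonneg (fun ω => hCnonneg R _) hint).1 (key R)
    filter_upwards [this] with ω hω using hω
  have hbig : ∀ᵐ ω ∂P, ∀ R : ℕ, (R : ℝ) + 1 ≤ |Z ω| := by
    rw [ae_all_iff]
    intro R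
    filter_upwards [hZero R] with ω hω
    by_contra hcon
    push_neg at hcon
    have hR1 : (0 : ℝ) < (R : ℝ) + 1 := by positivity
    have hpos : 0 < 1 - |Z ω| / ((R : ℝ) + 1) := by
      rw [sub_pos]
      exact (div_lt_one hR1).2 hcon
    have : 0 < C R (Z ω) := lt_of_lt_of_le hpos (le_max_left _ _)
    rw [hω] at this
    exact lt_irrefl _ this
  haveI : (ae P).NeBot := ae_neBot.2 (IsProbabilityMeasure.ne_zero P)
  obtain ⟨ω, hω⟩ := hbig.exists
  obtain ⟨R, hR⟩ := exists_nat_gt |Z ω|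
  have := hω R
  linarith

/-- Convergence in measure of vector-valued functions passes to coordinates. -/
private lemma tim_coord {Ω : Type*} [MeasurableSpace Ω] {P : Measure Ω} {m : ℕ}
    {F : ℕ → Ω → Fin m → ℝ} {G : Ω → Fin m → ℝ}
    (h : TendstoInMeasure P F atTop G) (j : Fin m) :
    TendstoInMeasure P (fun n ω => F n ω j) atTop (fun ω => G ω j) := by
  intro ε hε
  refine tendsto_of_tendsto_of_tendsto_of_le_of_le tendsto_const_nhds (h ε hε)
    (fun n => zero_le) (fun n => measure_mono fun ω hω => ?_)
  exact le_trans hω (edist_le_pi_edist (F n ω) (G ω) j)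

/-- Coordinatewise convergence in measure gives convergence in measure of the tuple. -/
private lemma tim_pi {Ω : Type*} [MeasurableSpace Ω] {P : Measure Ω} {k : ℕ}
    {F : ℕ → Ω → Fin k → ℝ} {G : Ω → Fin k → ℝ}
    (h : ∀ i, TendstoInMeasure P (fun n ω => F n ω i) atTop (fun ω => G ω i)) :
    TendstoInMeasure P F atTop G := by
  intro ε hε
  have hsub : ∀ n, {x | ε ≤ edist (F n x) (G x)}
      ⊆ ⋃ i, {x | ε ≤ edist (F n x i) (G x i)} := by
    intro n x hx
    by_contra hcon
    simp only [Set.mem_iUnion, Set.mem_setOf_eq, not_exists, not_le] at hcon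
    exact absurd hx (not_le.2 (show edist (F n x) (G x) < ε by rw [edist_pi_def]; exact (Finset.sup_lt_iff (bot_lt_iff_ne_bot.2 hε.ne')).2 fun i _ => hcon i))
  refine tendsto_of_tendsto_of_tendsto_of_le_of_le tendsto_const_nhds ?_
    (fun n => zero_le)
    (fun n => (measure_mono (hsub n)).trans (measure_iUnion_le _))
  have hrw : (fun n => ∑' i : Fin k, P {x | ε ≤ edist (F n x i) (G x i)})
      = fun n => ∑ i : Fin k, P {x | ε ≤ edist (F n x i) (G x i)} := by
    funext n; exact tsum_fintype _
  rw [hrw]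
  have h0 : Tendsto (fun n => ∑ i : Fin k, P {x | ε ≤ edist (F n x i) (G x i)})
      atTop (𝓝 (∑ _i : Fin k, (0 : ℝ≥0∞))) :=
    tendsto_finset_sum _ fun i _ => h i ε hε
  simpa using h0

/-- Let `X` be a non-degenerate wide-sense multi-self-similar
`ℝ^m`-valued random field on `T = [0,∞)^d` with scaling functions
`f_j(a) = ∏_i a_i^{H_i^{(j)}}`, and suppose for some index `j` that
`H₁^{(j)} = 0` while `H_i^{(j)} > 0` for all `i ≥ 2`. Then for every `a₁ > 0`
the field `{X_j(a₁t₁, t₂,...,t_d)}` has the same f.d.d. as `{X_j(t₁,...,t_d)}`,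
and consequently `{X_j(t)} =_{f.d.d.} {X_j(0,t₂,...,t_d)}`. -/
theorem stmt_12 {d m : ℕ} [NeZero d] {Ω : Type*} [MeasurableSpace Ω]
    (P : Measure Ω) [IsProbabilityMeasure P]
    (X : (Fin d → ℝ) → Ω → (Fin m → ℝ))
    (hXmeas : ∀ t, Measurable (X t))
    -- stochastic continuity on `[0,∞)^d`
    (hXcont : ∀ t : Fin d → ℝ, (∀ i, 0 ≤ t i) →
      ∀ u : ℕ → Fin d → ℝ, (∀ n i, 0 ≤ u n i) → Tendsto u atTop (𝓝 t) →
        TendstoInMeasure P (fun n => X (u n)) atTop (X t))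
    (f : (Fin d → ℝ) → Fin m → ℝ) (g : (Fin d → ℝ) → Fin m → ℝ)
    -- wide-sense multi-self-similarity
    (hss : ∀ a : Fin d → ℝ, (∀ i, 0 < a i) →
      ∀ (k : ℕ) (t : Fin k → Fin d → ℝ), (∀ i i', 0 ≤ t i i') →
        Measure.map (fun ω => fun i => X (a * t i) ω) P
          = Measure.map (fun ω => fun i => fun j => f a j * X (t i) ω j + g a j) P)
    -- non-degeneracy: `X_j(1,...,1)` is not a.s. constant
    (hnd : ∀ j, ¬ ∃ c : ℝ, ∀ᵐ ω ∂P, X (fun _ => 1) ω j = c)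
    (H : Fin m → Fin d → ℝ)
    (hf : ∀ a : Fin d → ℝ, (∀ i, 0 < a i) → ∀ j, f a j = ∏ i, a i ^ H j i)
    (j : Fin m)
    (hH0 : H j 0 = 0)
    (hHpos : ∀ i : Fin d, i ≠ 0 → 0 < H j i) :
    (∀ a₁ : ℝ, 0 < a₁ →
      ∀ (k : ℕ) (t : Fin k → Fin d → ℝ), (∀ i i', 0 ≤ t i i') →
        Measure.map (fun ω => fun i => X (Function.update (t i) 0 (a₁ * t i 0)) ω j) P
          = Measure.map (fun ω => fun i => X (t i) ω j) P) ∧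
    (∀ (k : ℕ) (t : Fin k → Fin d → ℝ), (∀ i i', 0 ≤ t i i') →
      Measure.map (fun ω => fun i => X (t i) ω j) P
        = Measure.map (fun ω => fun i => X (Function.update (t i) 0 0) ω j) P) := by
  classical
  -- the scaling vector `(b, 1, ..., 1)`
  set A : ℝ → Fin d → ℝ := fun b => Function.update (fun _ => (1 : ℝ)) 0 b with hAdef
  set one : Fin d → ℝ := fun _ => 1 with honedef
  have hA0 : ∀ b, A b 0 = b := fun b => by simp [hAdef]
  have hAne : ∀ b (i : Fin d), i ≠ 0 → A b i = 1 := fun b i hi => by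
    simp [hAdef, Function.update_of_ne hi, honedef]
  have hone_app : ∀ i : Fin d, one i = 1 := fun _ => rfl
  have hApos : ∀ b, 0 < b → ∀ i, 0 < A b i := by
    intro b hb i
    rcases eq_or_ne i 0 with h | h
    · rw [h, hA0]; exact hb
    · rw [hAne b i h]; norm_num
  have hone_nonneg : ∀ i : Fin d, (0:ℝ) ≤ one i := fun i => zero_le_one
  have hfA : ∀ b, 0 < b → f (A b) j = 1 := by
    intro b hb
    rw [hf _ (hApos b hb)]
    refine Finset.prod_eq_one fun i _ => ?_
    rcases eq_or_ne i 0 with h | h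
    · rw [h, hA0, hH0, Real.rpow_zero]
    · rw [hAne b i h, Real.one_rpow]
  -- measurability helpers
  have hXjm : ∀ s, Measurable fun ω => X s ω j :=
    fun s => (measurable_pi_apply j).comp (hXmeas s)
  -- projected self-similarity for families
  have hproj : ∀ a : Fin d → ℝ, (∀ i, 0 < a i) →
      ∀ (k : ℕ) (t : Fin k → Fin d → ℝ), (∀ i i', 0 ≤ t i i') →
        P.map (fun ω (i : Fin k) => X (a * t i) ω j)
          = P.map (fun ω (i : Fin k) => f a j * X (t i) ω j + g a j) := by
    intro a ha k t ht
    have h := hss a ha k t ht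
    have hπ : Measurable fun (v : Fin k → Fin m → ℝ) (i : Fin k) => v i j :=
      measurable_pi_lambda _ fun i => (measurable_pi_apply j).comp (measurable_pi_apply i)
    have h1 : Measurable fun ω (i : Fin k) => X (a * t i) ω :=
      measurable_pi_lambda _ fun i => hXmeas _
    have h2 : Measurable fun ω (i : Fin k) (j' : Fin m) => f a j' * X (t i) ω j' + g a j' :=
      measurable_pi_lambda _ fun i => measurable_pi_lambda _ fun j' =>
        (((measurable_pi_apply j').comp (hXmeas (t i))).const_mul _).add_const _
    have e1 : (P.map (fun ω (i : Fin k) => X (a * t i) ω)).map (fun v i => v i j)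
        = P.map (fun ω (i : Fin k) => X (a * t i) ω j) := Measure.map_map hπ h1
    have e2 : (P.map (fun ω (i : Fin k) (j' : Fin m) =>
        f a j' * X (t i) ω j' + g a j')).map (fun v i => v i j)
        = P.map (fun ω (i : Fin k) => f a j * X (t i) ω j + g a j) := Measure.map_map hπ h2
    rw [← e1, h, e2]
  -- projected self-similarity for single points
  have hD : ∀ a : Fin d → ℝ, (∀ i, 0 < a i) → ∀ s : Fin d → ℝ, (∀ i', 0 ≤ s i') →
      P.map (fun ω => X (a * s) ω j)
        = (P.map fun ω => X s ω j).map (fun x => f a j * x + g a j) := by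
    intro a ha s hs
    have h := hproj a ha 1 (fun _ => s) (fun _ i' => hs i')
    have he : Measurable fun v : Fin 1 → ℝ => v 0 := measurable_pi_apply 0
    have h1 : Measurable fun ω (_ : Fin 1) => X (a * s) ω j :=
      measurable_pi_lambda _ fun _ => hXjm _
    have h2 : Measurable fun ω (_ : Fin 1) => f a j * X s ω j + g a j :=
      measurable_pi_lambda _ fun _ => ((hXjm s).const_mul _).add_const _
    have e1 : (P.map (fun ω (_ : Fin 1) => X (a * s) ω j)).map (fun v => v 0)
        = P.map (fun ω => X (a * s) ω j) := Measure.map_map he h1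
    have e2 : (P.map (fun ω (_ : Fin 1) => f a j * X s ω j + g a j)).map (fun v => v 0)
        = P.map (fun ω => f a j * X s ω j + g a j) := Measure.map_map he h2
    have e3 : P.map (fun ω => f a j * X s ω j + g a j)
        = (P.map fun ω => X s ω j).map (fun x => f a j * x + g a j) :=
      (Measure.map_map ((measurable_id.const_mul _).add_const _) (hXjm s)).symm
    rw [← e1, h, e2, e3]
  set c : ℝ → ℝ := fun b => g (A b) j with hcdef
  set ν : Measure ℝ := P.map fun ω => X one ω j with hνdef
  haveI : IsProbabilityMeasure ν := Measure.isProbabilityMeasure_map (hXjm one).aemeasurable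
  have hDA : ∀ b, 0 < b → ∀ s : Fin d → ℝ, (∀ i', 0 ≤ s i') →
      P.map (fun ω => X (A b * s) ω j) = (P.map fun ω => X s ω j).map (· + c b) := by
    intro b hb s hs
    rw [hD (A b) (hApos b hb) s hs]
    congr 1
    funext x
    rw [hfA b hb, one_mul]
  -- Step: c b = 0 for 0 < b < 1 via stochastic continuity
  have hc_lt : ∀ b, 0 < b → b < 1 → c b = 0 := by
    intro b hb0 hb1
    by_contra hcb
    set s_ : ℕ → Fin d → ℝ := fun n => A (b ^ n) with hs_def
    have hs_pos : ∀ n i, 0 < s_ n i := fun n i => hApos _ (pow_pos hb0 n) i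
    have hmaps : ∀ n, P.map (fun ω => X (s_ n) ω j) = ν.map (· + (n : ℝ) * c b) := by
      intro n
      induction n with
      | zero =>
        have h0 : s_ 0 = one := by
          funext i
          rcases eq_or_ne i 0 with h | h
          · rw [hs_def]; simp only [h, hA0, pow_zero]; rfl
          · rw [hs_def]; simp only [hAne _ _ h]; rfl
        have hid : (fun x : ℝ => x + ((0 : ℕ) : ℝ) * c b) = id := by funext x; simp
        rw [h0, hid, Measure.map_id, hνdef]
      | succ n ih =>
        have hstep : s_ (n + 1) = A b * s_ n := by
          funext i
          rcases eq_or_ne i 0 with h | h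
          · rw [hs_def]
            simp only [h, Pi.mul_apply, hA0]
            rw [pow_succ, mul_comm]
          · rw [hs_def]
            simp only [Pi.mul_apply, hAne _ _ h, one_mul]
        rw [hstep, hDA b hb0 _ (fun i => (hs_pos n i).le), ih,
          Measure.map_map (by fun_prop) (by fun_prop)]
        congr 1
        funext x
        show x + (n : ℝ) * c b + c b = x + ((n + 1 : ℕ) : ℝ) * c b
        push_cast; ring
    -- limit point
    have hlim_nonneg : ∀ i, 0 ≤ A 0 i := by
      intro i
      rcases eq_or_ne i 0 with h | h
      · rw [h, hA0]
      · rw [hAne _ _ h]; norm_num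
    have htendsto : Tendsto s_ atTop (𝓝 (A 0)) := by
      rw [tendsto_pi_nhds]
      intro i
      rcases eq_or_ne i 0 with h | h
      · have : (fun n => s_ n i) = fun n => b ^ n := by
          funext n; rw [hs_def]; simp only [h, hA0]
        rw [this, h, hA0]
        exact tendsto_pow_atTop_nhds_zero_of_lt_one hb0.le hb1
      · have : (fun n => s_ n i) = fun _ => (1 : ℝ) := by
          funext n; rw [hs_def]; simp only [hAne _ _ h]
        rw [this, hAne _ _ h]
        exact tendsto_const_nhds
    have htim := hXcont (A 0) hlim_nonneg s_ (fun n i => (hs_pos n i).le) htendsto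
    obtain ⟨ns, hns_mono, hns_ae⟩ := (tim_coord htim j).exists_seq_tendsto_ae
    refine escape (P := P) (ν := ν) (Y := fun l ω => X (s_ (ns l)) ω j)
      (fun l => hXjm _) (Z := fun ω => X (A 0) ω j) hns_ae
      (r := fun l => (ns l : ℝ) * c b) ?_ (fun l => hmaps (ns l))
    have h1 : Tendsto (fun l => ((ns l : ℕ) : ℝ)) atTop atTop :=
      tendsto_natCast_atTop_atTop.comp hns_mono.tendsto_atTop
    have h2 := h1.atTop_mul_const (abs_pos.2 hcb)
    refine h2.congr fun l => ?_
    rw [abs_mul, Nat.abs_cast]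
  -- c 1 = 0
  have hAone : A 1 = one := by
    funext i
    rcases eq_or_ne i 0 with h | h
    · rw [h, hA0]
    · rw [hAne _ _ h]
  have hc1 : c 1 = 0 := by
    have hAone_mul : A 1 * one = one := by
      funext i
      rw [Pi.mul_apply, hAone]
      show one i * 1 = one i
      rw [mul_one]
    have h := hDA 1 one_pos one hone_nonneg
    rw [hAone_mul] at h
    exact shift_eq_zero (ν := ν) h.symm
  -- c b = 0 for b > 1
  have hc_gt : ∀ b, 1 < b → c b = 0 := by
    intro b hb1
    have hb0 : (0 : ℝ) < b := lt_trans one_pos hb1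
    have hinv0 : (0 : ℝ) < b⁻¹ := inv_pos.2 hb0
    have hinv1 : b⁻¹ < 1 := inv_lt_one_of_one_lt₀ hb1
    have hcinv : c b⁻¹ = 0 := hc_lt b⁻¹ hinv0 hinv1
    have hAinv_mul : A b⁻¹ * one = A b⁻¹ := by
      funext i
      rw [Pi.mul_apply]
      show A b⁻¹ i * 1 = A b⁻¹ i
      rw [mul_one]
    have h1 : P.map (fun ω => X (A b⁻¹) ω j) = ν := by
      have h := hDA b⁻¹ hinv0 one hone_nonneg
      rw [hAinv_mul, hcinv] at h
      have hid : (fun x : ℝ => x + 0) = id := by funext x; simp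
      rw [h, hid, Measure.map_id, hνdef]
    have h2 := hDA b hb0 (A b⁻¹) (fun i => (hApos _ hinv0 i).le)
    have h3 : A b * A b⁻¹ = one := by
      funext i
      rcases eq_or_ne i 0 with h | h
      · rw [Pi.mul_apply, h, hA0, hA0, mul_inv_cancel₀ hb0.ne']
      · rw [Pi.mul_apply, hAne _ _ h, hAne _ _ h, one_mul]
    rw [h3, h1] at h2
    exact shift_eq_zero (ν := ν) h2.symm
  have hc : ∀ b, 0 < b → c b = 0 := by
    intro b hb
    rcases lt_trichotomy b 1 with h | h | h
    · exact hc_lt b hb h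
    · rw [h]; exact hc1
    · exact hc_gt b h
  -- Part 1
  have hpart1 : ∀ a₁ : ℝ, 0 < a₁ →
      ∀ (k : ℕ) (t : Fin k → Fin d → ℝ), (∀ i i', 0 ≤ t i i') →
        Measure.map (fun ω => fun i => X (Function.update (t i) 0 (a₁ * t i 0)) ω j) P
          = Measure.map (fun ω => fun i => X (t i) ω j) P := by
    intro a₁ ha₁ k t ht
    have h := hproj (A a₁) (hApos _ ha₁) k t ht
    have hAt : ∀ i : Fin k, A a₁ * t i = Function.update (t i) 0 (a₁ * t i 0) := by
      intro i
      funext i'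
      rcases eq_or_ne i' 0 with h' | h'
      · rw [h', Pi.mul_apply, hA0, Function.update_self]
      · rw [Pi.mul_apply, hAne _ _ h', Function.update_of_ne h', one_mul]
    have hsimp : (fun ω (i : Fin k) => f (A a₁) j * X (t i) ω j + g (A a₁) j)
        = fun ω (i : Fin k) => X (t i) ω j := by
      funext ω i
      rw [hfA _ ha₁, one_mul, show g (A a₁) j = c a₁ from rfl, hc a₁ ha₁, add_zero]
    simp only [hAt] at h
    rw [h, hsimp]
  refine ⟨hpart1, ?_⟩
  -- Part 2
  intro k t ht
  set F : ℕ → Ω → Fin k → ℝ :=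
    fun n ω i => X (Function.update (t i) 0 ((2 : ℝ)⁻¹ ^ n * t i 0)) ω j with hFdef
  set G : Ω → Fin k → ℝ := fun ω i => X (Function.update (t i) 0 0) ω j with hGdef
  have hFn : ∀ n, P.map (F n) = P.map (fun ω (i : Fin k) => X (t i) ω j) :=
    fun n => hpart1 ((2 : ℝ)⁻¹ ^ n) (by positivity) k t ht
  have hFm : ∀ n, Measurable (F n) := fun n => measurable_pi_lambda _ fun i => hXjm _
  have hGm : Measurable G := measurable_pi_lambda _ fun i => hXjm _
  have htim : TendstoInMeasure P F atTop G := by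
    refine tim_pi fun i => ?_
    have hv_nonneg : ∀ i', 0 ≤ Function.update (t i) 0 (0 : ℝ) i' := by
      intro i'
      rcases eq_or_ne i' 0 with h | h
      · rw [h, Function.update_self]
      · rw [Function.update_of_ne h]; exact ht i i'
    have hu_nonneg : ∀ n i', 0 ≤ Function.update (t i) 0 ((2 : ℝ)⁻¹ ^ n * t i 0) i' := by
      intro n i'
      rcases eq_or_ne i' 0 with h | h
      · rw [h, Function.update_self]
        have := ht i 0
        positivity
      · rw [Function.update_of_ne h]; exact ht i i'
    have hu_tendsto : Tendsto (fun n => Function.update (t i) 0 ((2 : ℝ)⁻¹ ^ n * t i 0))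
        atTop (𝓝 (Function.update (t i) 0 0)) := by
      rw [tendsto_pi_nhds]
      intro i'
      rcases eq_or_ne i' 0 with h | h
      · subst h
        simp only [Function.update_self]
        have := (tendsto_pow_atTop_nhds_zero_of_lt_one (by norm_num : (0:ℝ) ≤ 2⁻¹)
          (by norm_num : (2:ℝ)⁻¹ < 1)).mul_const (t i 0)
        simpa using this
      · simp only [Function.update_of_ne h]
        exact tendsto_const_nhds
    exact tim_coord (hXcont (Function.update (t i) 0 0) hv_nonneg _ hu_nonneg hu_tendsto) j
  obtain ⟨ns, hns_mono, hns_ae⟩ := htim.exists_seq_tendsto_ae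
  haveI : IsProbabilityMeasure (P.map fun ω (i : Fin k) => X (t i) ω j) :=
    Measure.isProbabilityMeasure_map (measurable_pi_lambda _ fun i => hXjm (t i)).aemeasurable
  haveI : IsProbabilityMeasure (P.map G) := Measure.isProbabilityMeasure_map hGm.aemeasurable
  refine ext_of_forall_lintegral_eq_of_IsFiniteMeasure fun φ => ?_
  have hφm : Measurable fun x : Fin k → ℝ => (φ x : ℝ≥0∞) :=
    measurable_coe_nnreal_ennreal.comp φ.continuous.measurable
  have hC : ∀ x, φ x ≤ nndist φ 0 := by
    intro x
    have h := BoundedContinuousFunction.nndist_coe_le_nndist (f := φ) (g := 0) x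
    simp only [BoundedContinuousFunction.coe_zero, Pi.zero_apply] at h
    rwa [NNReal.nndist_zero_eq_val' (φ x)] at h
  have hten : Tendsto (fun l => ∫⁻ ω, (φ (F (ns l) ω) : ℝ≥0∞) ∂P) atTop
      (𝓝 (∫⁻ ω, (φ (G ω) : ℝ≥0∞) ∂P)) := by
    refine tendsto_lintegral_filter_of_dominated_convergence
      (fun _ => ((nndist φ 0 : ℝ≥0) : ℝ≥0∞))
      (Eventually.of_forall fun l => hφm.comp (hFm (ns l)))
      (Eventually.of_forall fun l => ae_of_all _ fun ω => ENNReal.coe_le_coe.2 (hC _))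
      ?_ (hns_ae.mono fun ω h =>
        (ENNReal.continuous_coe.tendsto _).comp ((φ.continuous.tendsto _).comp h))
    simp only [lintegral_const, measure_univ, mul_one]
    exact ENNReal.coe_ne_top
  have hconst : ∀ l, ∫⁻ ω, (φ (F (ns l) ω) : ℝ≥0∞) ∂P
      = ∫⁻ x, (φ x : ℝ≥0∞) ∂(P.map fun ω (i : Fin k) => X (t i) ω j) := by
    intro l
    rw [← hFn (ns l), lintegral_map hφm (hFm (ns l))]
  have hten' : Tendsto
      (fun _ : ℕ => ∫⁻ x, (φ x : ℝ≥0∞) ∂(P.map fun ω (i : Fin k) => X (t i) ω j)) atTop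
      (𝓝 (∫⁻ ω, (φ (G ω) : ℝ≥0∞) ∂P)) := hten.congr hconst
  have huniq := tendsto_nhds_unique hten' tendsto_const_nhds
  rw [lintegral_map hφm hGm]
  exact huniq.symm
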